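/- Let f ∈ ℂ[x,y,z] be homogeneous of degree d ≥ 1 not divisible by z, and g(x,y) = f(x,y,1). Then mdr(g) = mdr(f), where mdr(f) = min{r : AR(f)_r ≠ 0} and mdr(g) = min{r : AR(g)_{≤r} ≠ 0}. Moreover mdr(f) ≤ d − 1. -/
import Mathlib

open MvPolynomial

noncomputable section

/-- Dehomogenization `θ : ℂ[x,y,z] → ℂ[x,y]`, `u ↦ u(x,y,1)`. -/
def theta (u : MvPolynomial (Fin 3) ℂ) : MvPolynomial (Fin 2) ℂ :=
  aeval ![X 0, X 1, 1] u

/-- The syzygy-degree `sdeg(α,β,γ) = max(deg(x·γ + d·α), deg(y·γ + d·β), deg γ)`. -/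
def sdeg (d : ℕ)
    (ρ : MvPolynomial (Fin 2) ℂ × MvPolynomial (Fin 2) ℂ × MvPolynomial (Fin 2) ℂ) : ℕ :=
  max (totalDegree (X 0 * ρ.2.2 + (d : MvPolynomial (Fin 2) ℂ) * ρ.1))
    (max (totalDegree (X 1 * ρ.2.2 + (d : MvPolynomial (Fin 2) ℂ) * ρ.2.1))
      (totalDegree ρ.2.2))

/-- `mdr(f) = min{r : AR(f)_r ≠ 0}`. -/
def mdrf (f : MvPolynomial (Fin 3) ℂ) : ℕ :=
  sInf {r : ℕ | ∃ ρ : MvPolynomial (Fin 3) ℂ × MvPolynomial (Fin 3) ℂ × MvPolynomial (Fin 3) ℂ,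
    ρ ≠ 0 ∧
    ρ.1 * pderiv (0 : Fin 3) f + ρ.2.1 * pderiv (1 : Fin 3) f + ρ.2.2 * pderiv (2 : Fin 3) f = 0 ∧
    ρ.1.IsHomogeneous r ∧ ρ.2.1.IsHomogeneous r ∧ ρ.2.2.IsHomogeneous r}

/-- `mdr(g) = min{r : AR(g)_{≤ r} ≠ 0}`. -/
def mdrg (g : MvPolynomial (Fin 2) ℂ) (d : ℕ) : ℕ :=
  sInf {r : ℕ | ∃ ρ : MvPolynomial (Fin 2) ℂ × MvPolynomial (Fin 2) ℂ × MvPolynomial (Fin 2) ℂ,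
    ρ ≠ 0 ∧
    ρ.1 * pderiv (0 : Fin 2) g + ρ.2.1 * pderiv (1 : Fin 2) g + ρ.2.2 * g = 0 ∧
    sdeg d ρ ≤ r}

abbrev Rng := MvPolynomial (Fin 2) ℂ
abbrev Sng := MvPolynomial (Fin 3) ℂ

lemma degree_fin {n : ℕ} (m : Fin n →₀ ℕ) : m.degree = ∑ i, m i := by
  rw [Finsupp.degree]
  exact Finset.sum_subset (Finset.subset_univ _)
    (fun i _ hi => Finsupp.notMem_support_iff.mp hi)

lemma deg2 (m : Fin 2 →₀ ℕ) : m.degree = m 0 + m 1 := by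
  rw [degree_fin, Fin.sum_univ_two]

lemma deg3 (m : Fin 3 →₀ ℕ) : m.degree = m 0 + m 1 + m 2 := by
  rw [degree_fin, Fin.sum_univ_three]

def projE (m : Fin 3 →₀ ℕ) : Fin 2 →₀ ℕ :=
  Finsupp.equivFunOnFinite.symm ![m 0, m 1]

def embE (r : ℕ) (m : Fin 2 →₀ ℕ) : Fin 3 →₀ ℕ :=
  Finsupp.equivFunOnFinite.symm ![m 0, m 1, r - m 0 - m 1]

@[simp] lemma projE_apply (m : Fin 3 →₀ ℕ) (i : Fin 2) : projE m i = ![m 0, m 1] i := rfl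
@[simp] lemma embE_apply (r : ℕ) (m : Fin 2 →₀ ℕ) (i : Fin 3) :
    embE r m i = ![m 0, m 1, r - m 0 - m 1] i := rfl

lemma projE_embE (r : ℕ) (m : Fin 2 →₀ ℕ) : projE (embE r m) = m := by
  ext i
  fin_cases i <;> simp

lemma theta_sum {ι : Type*} (s : Finset ι) (f : ι → Sng) :
    theta (∑ i ∈ s, f i) = ∑ i ∈ s, theta (f i) :=
  map_sum (aeval ![X 0, X 1, 1]) _ _

lemma sum_id_eq_degree {n : ℕ} (s : Fin n →₀ ℕ) : (s.sum fun _ e => e) = s.degree := rfl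

lemma theta_monomial (m : Fin 3 →₀ ℕ) (c : ℂ) :
    theta (monomial m c) = monomial (projE m) c := by
  rw [theta, aeval_monomial, monomial_eq]
  rw [Finsupp.prod_fintype _ _ (fun i => pow_zero _),
    Finsupp.prod_fintype _ _ (fun i => pow_zero _)]
  rw [Fin.prod_univ_three, Fin.prod_univ_two]
  simp [algebraMap_eq]

@[simp] lemma theta_zero : theta 0 = 0 := map_zero (aeval ![X 0, X 1, 1] : Sng →ₐ[ℂ] Rng)

def Hg (r : ℕ) (p : Rng) : Sng :=
  ∑ m ∈ p.support, monomial (embE r m) (coeff m p)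

lemma theta_Hg (r : ℕ) (p : Rng) : theta (Hg r p) = p := by
  have : theta (Hg r p) = ∑ m ∈ p.support, monomial m (coeff m p) := by
    rw [Hg, theta_sum]
    refine Finset.sum_congr rfl fun m _ => ?_
    rw [theta_monomial, projE_embE]
  rw [this, support_sum_monomial_coeff]

lemma Hg_isHomogeneous (r : ℕ) (p : Rng) (h : p.totalDegree ≤ r) :
    (Hg r p).IsHomogeneous r := by
  apply IsHomogeneous.sum
  intro m hm
  apply isHomogeneous_monomial
  have hle : m 0 + m 1 ≤ r := by
    have := le_totalDegree (p := p) hm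
    have hd : m.degree = m 0 + m 1 := deg2 m
    calc m 0 + m 1 = m.degree := hd.symm
    _ ≤ p.totalDegree := this
    _ ≤ r := h
  rw [deg3]
  show m 0 + m 1 + (r - m 0 - m 1) = r
  omega

lemma theta_totalDegree_le (u : Sng) : (theta u).totalDegree ≤ u.totalDegree := by
  conv_lhs => rw [← support_sum_monomial_coeff u]
  rw [theta_sum]
  refine (totalDegree_finset_sum _ _).trans (Finset.sup_le fun m hm => ?_)
  rw [theta_monomial]
  refine (totalDegree_monomial_le _ _).trans ?_
  have h1 : (projE m).degree = m 0 + m 1 := by rw [deg2]; simp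
  have h2 : m.degree ≤ u.totalDegree := le_totalDegree hm
  rw [deg3] at h2
  have h3 : ((projE m).sum fun _ ↦ id) = (projE m).degree := rfl
  rw [h3, h1]
  omega

lemma theta_injective_homog {r : ℕ} {u : Sng} (hu : u.IsHomogeneous r)
    (h : theta u = 0) : u = 0 := by
  have hdeg : ∀ m ∈ u.support, m.degree = r := by
    intro m hm
    by_contra hne
    exact (mem_support_iff.mp hm) (hu.coeff_eq_zero hne)
  have hsum : theta u = ∑ m ∈ u.support, monomial (projE m) (coeff m u) := by
    conv_lhs => rw [← support_sum_monomial_coeff u]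
    rw [theta_sum]
    exact Finset.sum_congr rfl fun m _ => theta_monomial _ _
  ext m
  by_cases hm : m ∈ u.support
  · have hinj : ∀ m' ∈ u.support, projE m' = projE m → m' = m := by
      intro m' hm' he
      have h0 : m' 0 = m 0 := by
        have := congrArg (fun f => f 0) he; simpa using this
      have h1 : m' 1 = m 1 := by
        have := congrArg (fun f => f 1) he; simpa using this
      have d1 := hdeg m hm
      have d2 := hdeg m' hm'
      rw [deg3] at d1 d2
      ext i
      fin_cases i
      · exact h0
      · exact h1
      · show m' 2 = m 2
        omega
    have : coeff (projE m) (theta u) = coeff m u := by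
      rw [hsum, coeff_sum]
      rw [Finset.sum_eq_single m]
      · simp [coeff_monomial]
      · intro m' hm' hne
        rw [coeff_monomial, if_neg]
        intro he
        exact hne (hinj m' hm' he)
      · intro h'; exact absurd hm h'
    rw [h] at this
    simp at this
    simp [this]
  · simp [notMem_support_iff.mp hm]

@[simp] lemma theta_add (u v : Sng) : theta (u + v) = theta u + theta v :=
  map_add (aeval ![X 0, X 1, 1]) _ _
@[simp] lemma theta_mul (u v : Sng) : theta (u * v) = theta u * theta v :=
  map_mul (aeval ![X 0, X 1, 1]) _ _

lemma theta_pderiv0 (u : Sng) :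
    pderiv (0 : Fin 2) (theta u) = theta (pderiv (0 : Fin 3) u) := by
  induction u using MvPolynomial.induction_on with
  | C a => simp [theta]
  | add p q hp hq => simp only [theta_add, map_add, hp, hq]
  | mul_X p j hp =>
    have hx : pderiv (0 : Fin 2) (theta (X j)) = theta (pderiv (0 : Fin 3) (X j)) := by
      fin_cases j <;> simp [theta]
    rw [theta_mul, pderiv_mul, hp, hx,
      show pderiv (0:Fin 3) (p * X j) = pderiv 0 p * X j + p * pderiv 0 (X j) from pderiv_mul,
      theta_add, theta_mul, theta_mul]

lemma theta_pderiv1 (u : Sng) :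
    pderiv (1 : Fin 2) (theta u) = theta (pderiv (1 : Fin 3) u) := by
  induction u using MvPolynomial.induction_on with
  | C a => simp [theta]
  | add p q hp hq => simp only [theta_add, map_add, hp, hq]
  | mul_X p j hp =>
    have hx : pderiv (1 : Fin 2) (theta (X j)) = theta (pderiv (1 : Fin 3) (X j)) := by
      fin_cases j <;> simp [theta]
    rw [theta_mul, pderiv_mul, hp, hx,
      show pderiv (1:Fin 3) (p * X j) = pderiv 1 p * X j + p * pderiv 1 (X j) from pderiv_mul,
      theta_add, theta_mul, theta_mul]

-- Euler's identity
lemma X_mul_pderiv_monomial {i : Fin 3} (m : Fin 3 →₀ ℕ) (c : ℂ) :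
    X i * pderiv i (monomial m c) = monomial m (c * m i) := by
  rw [pderiv_monomial]
  by_cases h : m i = 0
  · simp [h]
  · rw [X, monomial_mul, one_mul]
    have hm : (Finsupp.single i 1) + (m - Finsupp.single i 1) = m := by
      ext j
      by_cases hj : j = i
      · subst hj
        simp only [Finsupp.add_apply, Finsupp.tsub_apply, Finsupp.single_eq_same]
        omega
      · simp [Finsupp.single_apply, Ne.symm hj, hj, Finsupp.tsub_apply]
    rw [hm]

lemma euler {d : ℕ} {f : Sng} (hf : f.IsHomogeneous d) :
    X 0 * pderiv (0 : Fin 3) f + X 1 * pderiv (1 : Fin 3) f + X 2 * pderiv (2 : Fin 3) f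
      = (d : Sng) * f := by
  conv_lhs => rw [← support_sum_monomial_coeff f]
  conv_rhs => rw [← support_sum_monomial_coeff f, Finset.mul_sum]
  rw [map_sum (pderiv (0:Fin 3)), map_sum (pderiv (1:Fin 3)), map_sum (pderiv (2:Fin 3)),
    Finset.mul_sum, Finset.mul_sum, Finset.mul_sum, ← Finset.sum_add_distrib,
    ← Finset.sum_add_distrib]
  refine Finset.sum_congr rfl fun m hm => ?_
  rw [X_mul_pderiv_monomial, X_mul_pderiv_monomial, X_mul_pderiv_monomial]
  have hdm : m.degree = d := by
    by_contra hne
    exact (mem_support_iff.mp hm) (hf.coeff_eq_zero hne)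
  rw [deg3] at hdm
  have : (d : Sng) * monomial m (coeff m f) = monomial m (d * coeff m f) := by
    rw [show ((d:ℕ) : Sng) = C ((d:ℕ) : ℂ) by simp, C_mul_monomial]
  rw [this, ← map_add, ← map_add]
  congr 1
  push_cast [← hdm]
  ring

lemma isHomogeneous_pderiv {d : ℕ} {f : Sng} (hf : f.IsHomogeneous d) (i : Fin 3) :
    (pderiv i f).IsHomogeneous (d - 1) := by
  conv => enter [1]; rw [← support_sum_monomial_coeff f]
  rw [map_sum (pderiv i)]
  apply IsHomogeneous.sum
  intro m hm
  rw [pderiv_monomial]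
  by_cases h : m i = 0
  · simp only [h, Nat.cast_zero, mul_zero]; simp
    exact isHomogeneous_zero _ _ _
  · apply isHomogeneous_monomial
    have hdm : m.degree = d := by
      by_contra hne
      exact (mem_support_iff.mp hm) (hf.coeff_eq_zero hne)
    rw [deg3] at hdm
    rw [deg3]
    simp only [Finsupp.tsub_apply]
    fin_cases i
    · replace h : m 0 ≠ 0 := h
      simp [Finsupp.single_apply, Fin.ext_iff]
      omega
    · replace h : m 1 ≠ 0 := h
      simp [Finsupp.single_apply, Fin.ext_iff]
      omega
    · replace h : m 2 ≠ 0 := h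
      simp [Finsupp.single_apply, Fin.ext_iff]
      omega


lemma theta_natCast (n : ℕ) : theta (n : Sng) = (n : Rng) :=
  map_natCast (aeval ![X 0, X 1, 1] : Sng →ₐ[ℂ] Rng) n

@[simp] lemma theta_X0 : theta (X 0) = (X 0 : Rng) := by simp [theta]
@[simp] lemma theta_X1 : theta (X 1) = (X 1 : Rng) := by simp [theta]
@[simp] lemma theta_X2 : theta (X 2) = (1 : Rng) := by simp [theta]

lemma natCast_ne_zero_Rng {d : ℕ} (hd : 1 ≤ d) : (d : Rng) ≠ 0 := by
  exact_mod_cast Nat.cast_ne_zero.mpr (by omega)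

lemma td_natCast_mul (d : ℕ) (p : Rng) : ((d : Rng) * p).totalDegree ≤ p.totalDegree := by
  have h0 : ((d : ℕ) : Rng).totalDegree = 0 := by
    rw [show ((d : ℕ) : Rng) = C ((d : ℕ) : ℂ) by simp]
    exact totalDegree_C _
  exact (totalDegree_mul _ _).trans (by rw [h0]; simp)

lemma euler_theta {d : ℕ} {f : Sng} (hf : f.IsHomogeneous d) :
    X 0 * theta (pderiv (0 : Fin 3) f) + X 1 * theta (pderiv (1 : Fin 3) f)
      + theta (pderiv (2 : Fin 3) f) = (d : Rng) * theta f := by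
  have h := congrArg theta (euler hf)
  simpa [theta_natCast] using h

lemma dir_f_to_g {f : Sng} {d r : ℕ} (hd : 1 ≤ d) (hf : f.IsHomogeneous d)
    (h : ∃ ρ : Sng × Sng × Sng, ρ ≠ 0 ∧
      ρ.1 * pderiv (0 : Fin 3) f + ρ.2.1 * pderiv (1 : Fin 3) f
        + ρ.2.2 * pderiv (2 : Fin 3) f = 0 ∧
      ρ.1.IsHomogeneous r ∧ ρ.2.1.IsHomogeneous r ∧ ρ.2.2.IsHomogeneous r) :
    ∃ ρ : Rng × Rng × Rng, ρ ≠ 0 ∧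
      ρ.1 * pderiv (0 : Fin 2) (theta f) + ρ.2.1 * pderiv (1 : Fin 2) (theta f)
        + ρ.2.2 * theta f = 0 ∧ sdeg d ρ ≤ r := by
  obtain ⟨⟨a, b, c⟩, hne, hsyz, ha, hb, hc⟩ := h
  set A := theta a
  set B := theta b
  set Cc := theta c
  set u := theta (pderiv (0 : Fin 3) f)
  set v := theta (pderiv (1 : Fin 3) f)
  set w := theta (pderiv (2 : Fin 3) f)
  have e1 : X 0 * u + X 1 * v + w = (d : Rng) * theta f := euler_theta hf
  have e2 : A * u + B * v + Cc * w = 0 := by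
    have := congrArg theta hsyz
    simpa [A, B, Cc, u, v, w] using this
  refine ⟨(A - X 0 * Cc, B - X 1 * Cc, (d : Rng) * Cc), ?_, ?_, ?_⟩
  · intro h0
    simp only [Prod.ext_iff, Prod.fst_zero, Prod.snd_zero] at h0
    obtain ⟨h1, h2, h3⟩ := h0
    have hC : Cc = 0 := by
      rcases mul_eq_zero.mp h3 with h | h
      · exact absurd h (natCast_ne_zero_Rng hd)
      · exact h
    rw [hC] at h1 h2
    simp at h1 h2
    have ha0 : a = 0 := theta_injective_homog ha h1
    have hb0 : b = 0 := theta_injective_homog hb h2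
    have hc0 : c = 0 := theta_injective_homog hc hC
    exact hne (by simp [ha0, hb0, hc0, Prod.ext_iff])
  · have h0 : pderiv (0 : Fin 2) (theta f) = u := theta_pderiv0 f
    have h1 : pderiv (1 : Fin 2) (theta f) = v := theta_pderiv1 f
    simp only [h0, h1]
    linear_combination e2 - Cc * e1
  · have hAd : A.totalDegree ≤ r := (theta_totalDegree_le a).trans ha.totalDegree_le
    have hBd : B.totalDegree ≤ r := (theta_totalDegree_le b).trans hb.totalDegree_le
    have hCd : Cc.totalDegree ≤ r := (theta_totalDegree_le c).trans hc.totalDegree_le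
    rw [sdeg]
    refine max_le ?_ (max_le ?_ ?_)
    · have : X 0 * ((d : Rng) * Cc) + (d : Rng) * (A - X 0 * Cc) = (d : Rng) * A := by ring
      rw [this]
      exact (td_natCast_mul d A).trans hAd
    · have : X 1 * ((d : Rng) * Cc) + (d : Rng) * (B - X 1 * Cc) = (d : Rng) * B := by ring
      rw [this]
      exact (td_natCast_mul d B).trans hBd
    · exact (td_natCast_mul d Cc).trans hCd

lemma dir_g_to_f {f : Sng} {d r : ℕ} (hd : 1 ≤ d) (hf : f.IsHomogeneous d)
    (h : ∃ ρ : Rng × Rng × Rng, ρ ≠ 0 ∧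
      ρ.1 * pderiv (0 : Fin 2) (theta f) + ρ.2.1 * pderiv (1 : Fin 2) (theta f)
        + ρ.2.2 * theta f = 0 ∧ sdeg d ρ ≤ r) :
    ∃ ρ : Sng × Sng × Sng, ρ ≠ 0 ∧
      ρ.1 * pderiv (0 : Fin 3) f + ρ.2.1 * pderiv (1 : Fin 3) f
        + ρ.2.2 * pderiv (2 : Fin 3) f = 0 ∧
      ρ.1.IsHomogeneous r ∧ ρ.2.1.IsHomogeneous r ∧ ρ.2.2.IsHomogeneous r := by
  obtain ⟨⟨p, q, s⟩, hne, hsyz, hdeg⟩ := h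
  set u := theta (pderiv (0 : Fin 3) f)
  set v := theta (pderiv (1 : Fin 3) f)
  set w := theta (pderiv (2 : Fin 3) f)
  have e1 : X 0 * u + X 1 * v + w = (d : Rng) * theta f := euler_theta hf
  have hsyz' : p * u + q * v + s * theta f = 0 := by
    have h0 : pderiv (0 : Fin 2) (theta f) = u := theta_pderiv0 f
    have h1 : pderiv (1 : Fin 2) (theta f) = v := theta_pderiv1 f
    rw [h0, h1] at hsyz
    exact hsyz
  set α := X 0 * s + (d : Rng) * p with hα_def
  set β := X 1 * s + (d : Rng) * q with hβ_def
  rw [sdeg] at hdeg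
  have hαd : α.totalDegree ≤ r := le_trans (le_max_left _ _) hdeg
  have hβd : β.totalDegree ≤ r := le_trans (le_max_of_le_right (le_max_left _ _)) hdeg
  have hsd : s.totalDegree ≤ r := le_trans (le_max_of_le_right (le_max_right _ _)) hdeg
  refine ⟨(Hg r α, Hg r β, Hg r s), ?_, ?_,
    Hg_isHomogeneous r α hαd, Hg_isHomogeneous r β hβd, Hg_isHomogeneous r s hsd⟩
  · intro h0
    simp only [Prod.ext_iff, Prod.fst_zero, Prod.snd_zero] at h0
    obtain ⟨h1, h2, h3⟩ := h0
    have hα0 : α = 0 := by rw [← theta_Hg r α, h1]; simp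
    have hβ0 : β = 0 := by rw [← theta_Hg r β, h2]; simp
    have hs0 : s = 0 := by rw [← theta_Hg r s, h3]; simp
    have hp0 : p = 0 := by
      have : (d : Rng) * p = 0 := by
        have := hα0; rw [hα_def, hs0] at this; simpa using this
      rcases mul_eq_zero.mp this with h | h
      · exact absurd h (natCast_ne_zero_Rng hd)
      · exact h
    have hq0 : q = 0 := by
      have : (d : Rng) * q = 0 := by
        have := hβ0; rw [hβ_def, hs0] at this; simpa using this
      rcases mul_eq_zero.mp this with h | h
      · exact absurd h (natCast_ne_zero_Rng hd)
      · exact h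
    exact hne (by simp [hp0, hq0, hs0, Prod.ext_iff])
  · apply theta_injective_homog (r := r + (d - 1))
    · refine IsHomogeneous.add (IsHomogeneous.add ?_ ?_) ?_ <;>
        exact IsHomogeneous.mul (Hg_isHomogeneous r _ (by assumption))
          (isHomogeneous_pderiv hf _)
    · have hth : theta (Hg r α * pderiv (0:Fin 3) f + Hg r β * pderiv (1:Fin 3) f
          + Hg r s * pderiv (2:Fin 3) f) = α * u + β * v + s * w := by
        simp [theta_add, theta_mul, theta_Hg, u, v, w]
      rw [hth, hα_def, hβ_def]
      linear_combination (d : Rng) * hsyz' + s * e1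

lemma witness_f {f : Sng} {d : ℕ} (hd : 1 ≤ d) (hf : f.IsHomogeneous d) :
    ∃ r ≤ d - 1, ∃ ρ : Sng × Sng × Sng, ρ ≠ 0 ∧
      ρ.1 * pderiv (0 : Fin 3) f + ρ.2.1 * pderiv (1 : Fin 3) f
        + ρ.2.2 * pderiv (2 : Fin 3) f = 0 ∧
      ρ.1.IsHomogeneous r ∧ ρ.2.1.IsHomogeneous r ∧ ρ.2.2.IsHomogeneous r := by
  by_cases hy : pderiv (1 : Fin 3) f = 0
  · refine ⟨0, Nat.zero_le _, (0, 1, 0), ?_, by simp [hy], isHomogeneous_zero _ _ _,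
      isHomogeneous_one _ _, isHomogeneous_zero _ _ _⟩
    intro h0
    simp only [Prod.ext_iff, Prod.fst_zero, Prod.snd_zero] at h0
    exact one_ne_zero h0.2.1
  · refine ⟨d - 1, le_refl _, (0, pderiv (2 : Fin 3) f, -pderiv (1 : Fin 3) f), ?_,
      by ring, isHomogeneous_zero _ _ _, isHomogeneous_pderiv hf _,
      (isHomogeneous_pderiv hf _).neg⟩
    intro h0
    simp only [Prod.ext_iff, Prod.fst_zero, Prod.snd_zero] at h0
    exact hy (by simpa using h0.2.2)

/-- For `f ∈ ℂ[x,y,z]` homogeneous of degree `d ≥ 1` not divisible by `z`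
and `g = f(x,y,1)`, one has `mdr(g) = mdr(f)` and `mdr(f) ≤ d − 1`. -/
theorem mdr_affine_eq_mdr_projective (f : MvPolynomial (Fin 3) ℂ) (d : ℕ) (hd : 1 ≤ d)
    (hf : f.IsHomogeneous d) (hz : ¬ (X (2 : Fin 3) ∣ f)) :
    mdrg (theta f) d = mdrf f ∧ mdrf f ≤ d - 1 := by
  obtain ⟨r0, hr0le, hr0⟩ := witness_f hd hf
  constructor
  · rw [mdrg, mdrf]
    congr 1
    ext r
    exact ⟨fun h => dir_g_to_f hd hf h, fun h => dir_f_to_g hd hf h⟩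
  · exact le_trans (Nat.sInf_le hr0) hr0le
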